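/- arXiv:1301.1152 — 2 statements merged into one kernel-verified Lean document; each statement's English description precedes it below -/
import Mathlib

section
/- The discrete semilattice (ℕ, max) has no universal 𝓐𝓗-completion: there is no 𝓐𝓗-complete Hausdorff topological semilattice S containing (ℕ, max) densely such that every continuous homomorphism from (ℕ, max) to an 𝓐𝓗-complete Hausdorff topological semilattice extends to a continuous homomorphism on S. -/
open Topology Set

/-- A filter is free if the intersection of all its members is empty. -/
def FreeF (F : Filter ℕ) : Prop := ⋂₀ F.sets = ∅

/-- The topology on ℕ_ℱ = ℕ ∪ {ℱ} (modelled as `Option ℕ`, with `none` the point ℱ):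
all points of ℕ are isolated, and the sets F ∪ {ℱ}, F ∈ ℱ, form a neighbourhood base at ℱ. -/
def nfTop (F : Filter ℕ) : TopologicalSpace (Option ℕ) where
  IsOpen U := none ∈ U → {n : ℕ | some n ∈ U} ∈ F
  isOpen_univ := fun _ => by simp
  isOpen_inter := fun U V hU hV h => Filter.inter_mem (hU h.1) (hV h.2)
  isOpen_sUnion := fun S hS h => by
    obtain ⟨U, hUS, hnU⟩ := h
    exact Filter.mem_of_superset (hS U hUS hnU) fun n hn => ⟨U, hUS, hn⟩

/-- min on ℕ extended to ℕ_ℱ by min(n,ℱ) = n, min(ℱ,ℱ) = ℱ. -/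
def minOp : Option ℕ → Option ℕ → Option ℕ
  | none, y => y
  | some a, none => some a
  | some a, some b => some (min a b)

/-- max on ℕ extended to ℕ_ℱ by max(n,ℱ) = ℱ = max(ℱ,ℱ). -/
def maxOp : Option ℕ → Option ℕ → Option ℕ
  | none, _ => none
  | _, none => none
  | some a, some b => some (max a b)

/-- `X` with operation `op` is a (Hausdorff) topological semilattice. -/
structure IsTopSemilattice (X : Type*) [TopologicalSpace X] (op : X → X → X) : Prop where
  t2 : T2Space X
  comm : ∀ a b, op a b = op b a
  idem : ∀ a, op a a = a
  assoc : ∀ a b c, op (op a b) c = op a (op b c)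
  cont : Continuous fun p : X × X => op p.1 p.2

/-- 𝓗-completeness: the image under any topological embedding which is a semilattice
homomorphism into a Hausdorff topological semilattice is closed. -/
def HComplete (X : Type*) [TopologicalSpace X] (op : X → X → X) : Prop :=
  ∀ (Y : Type*) [TopologicalSpace Y] (opY : Y → Y → Y), IsTopSemilattice Y opY →
    ∀ f : X → Y, Topology.IsEmbedding f →
      (∀ a b, f (op a b) = opY (f a) (f b)) → IsClosed (Set.range f)

/-- 𝓐𝓗-completeness: the image under any continuous semilattice homomorphism
into a Hausdorff topological semilattice is closed. -/
def AHComplete (X : Type*) [TopologicalSpace X] (op : X → X → X) : Prop :=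
  ∀ (Y : Type*) [TopologicalSpace Y] (opY : Y → Y → Y), IsTopSemilattice Y opY →
    ∀ f : X → Y, Continuous f →
      (∀ a b, f (op a b) = opY (f a) (f b)) → IsClosed (Set.range f)

-- helpers
lemma maxOp_none_left (y : Option ℕ) : maxOp none y = none := by cases y <;> rfl
lemma maxOp_some_none (a : ℕ) : maxOp (some a) none = none := rfl
lemma maxOp_some_some (a b : ℕ) : maxOp (some a) (some b) = some (max a b) := rfl

lemma free_compl_singleton {F : Filter ℕ} (hF : FreeF F) (n : ℕ) : ({n}ᶜ : Set ℕ) ∈ F := by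
  have : n ∉ ⋂₀ F.sets := by rw [hF]; exact notMem_empty n
  simp only [mem_sInter, not_forall] at this
  obtain ⟨t, ht, hnt⟩ := this
  exact Filter.mem_of_superset ht fun x hx => by simp; rintro rfl; exact hnt hx

lemma compl_finite_mem {F : Filter ℕ} (h : ∀ n : ℕ, ({n}ᶜ : Set ℕ) ∈ F) {s : Set ℕ}
    (hs : s.Finite) : sᶜ ∈ F := by
  classical
  refine Set.Finite.induction_on s hs ?_ ?_
  · simpa using Filter.univ_mem
  · intro a t _ _ ih
    have : (insert a t)ᶜ = {a}ᶜ ∩ tᶜ := by ext x; simp [not_or]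
    rw [this]
    exact Filter.inter_mem (h a) ih

lemma free_gt_mem {F : Filter ℕ} (hF : FreeF F) (b : ℕ) : {k : ℕ | b < k} ∈ F := by
  have e : {k : ℕ | b < k} = (Set.Iic b)ᶜ := by ext k; simp
  rw [e]
  exact compl_finite_mem (free_compl_singleton hF) (Set.finite_Iic b)

lemma nf_isOpen_iff (F : Filter ℕ) (U : Set (Option ℕ)) :
    IsOpen[nfTop F] U ↔ (none ∈ U → {n : ℕ | some n ∈ U} ∈ F) := Iff.rfl

lemma nf_isOpen_singleton_some (F : Filter ℕ) (n : ℕ) : IsOpen[nfTop F] {some n} := by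
  rw [nf_isOpen_iff]; intro h; simp at h

lemma nf_mem_nhds_some {F : Filter ℕ} {n : ℕ} {V : Set (Option ℕ)} (h : some n ∈ V) :
    V ∈ @nhds _ (nfTop F) (some n) :=
  @mem_nhds_iff _ (nfTop F) |>.mpr ⟨{some n}, by simpa using h, nf_isOpen_singleton_some F n, rfl⟩

lemma nf_mem_nhds_none {F : Filter ℕ} {V : Set (Option ℕ)} :
    V ∈ @nhds _ (nfTop F) none ↔ none ∈ V ∧ {k : ℕ | some k ∈ V} ∈ F := by
  constructor
  · intro h
    obtain ⟨U, hUV, hU, hnU⟩ := (@mem_nhds_iff _ (nfTop F)).mp h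
    exact ⟨hUV hnU, Filter.mem_of_superset (hU hnU) fun k hk => hUV hk⟩
  · rintro ⟨h1, h2⟩
    exact (@mem_nhds_iff _ (nfTop F)).mpr ⟨V, le_refl _, fun _ => h2, h1⟩

lemma nf_topsemilattice {F : Filter ℕ} (hF : FreeF F) :
    @IsTopSemilattice (Option ℕ) (nfTop F) maxOp := by
  letI := nfTop F
  refine ⟨?_, ?_, ?_, ?_, ?_⟩
  · -- T2
    constructor
    intro x y hxy
    match x, y with
    | some a, some b =>
      refine ⟨{some a}, {some b}, nf_isOpen_singleton_some F a, nf_isOpen_singleton_some F b,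
        rfl, rfl, ?_⟩
      simp only [Set.disjoint_singleton]
      exact hxy
    | some a, none =>
      refine ⟨{some a}, insert none (some '' ({a}ᶜ)), nf_isOpen_singleton_some F a, ?_, rfl,
        Set.mem_insert _ _, ?_⟩
      · intro _
        have : {n : ℕ | some n ∈ insert none (some '' ({a}ᶜ : Set ℕ))} = ({a}ᶜ : Set ℕ) := by
          ext k; simp
        rw [this]; exact free_compl_singleton hF a
      · rw [Set.disjoint_left]
        rintro z rfl
        simp
    | none, some a =>
      refine ⟨insert none (some '' ({a}ᶜ)), {some a}, ?_, nf_isOpen_singleton_some F a,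
        Set.mem_insert _ _, rfl, ?_⟩
      · intro _
        have : {n : ℕ | some n ∈ insert none (some '' ({a}ᶜ : Set ℕ))} = ({a}ᶜ : Set ℕ) := by
          ext k; simp
        rw [this]; exact free_compl_singleton hF a
      · rw [Set.disjoint_right]
        rintro z rfl
        simp
    | none, none => exact absurd rfl hxy
  · rintro (_|a) (_|b) <;> simp [maxOp, Nat.max_comm]
  · rintro (_|a) <;> simp [maxOp]
  · rintro (_|a) (_|b) (_|c) <;> simp [maxOp, Nat.max_assoc]
  · -- continuity
    rw [continuous_iff_continuousAt]
    rintro ⟨p, q⟩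
    unfold ContinuousAt
    rw [nhds_prod_eq]
    intro V hV
    rw [Filter.mem_map]
    match p, q with
    | some a, some b =>
      refine Filter.mem_prod_iff.mpr ⟨{some a}, nf_mem_nhds_some rfl, {some b},
        nf_mem_nhds_some rfl, ?_⟩
      rintro ⟨x, y⟩ ⟨hx, hy⟩
      simp only [Set.mem_singleton_iff] at hx hy
      subst hx; subst hy
      show maxOp (some a) (some b) ∈ V
      exact mem_of_mem_nhds hV
    | none, none =>
      obtain ⟨h1, h2⟩ := nf_mem_nhds_none.mp hV
      set G := {k : ℕ | some k ∈ V} with hG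
      refine Filter.mem_prod_iff.mpr ⟨insert none (some '' G), ?_, insert none (some '' G), ?_, ?_⟩
      · exact nf_mem_nhds_none.mpr ⟨Set.mem_insert _ _, by simpa using h2⟩
      · exact nf_mem_nhds_none.mpr ⟨Set.mem_insert _ _, by simpa using h2⟩
      · rintro ⟨x, y⟩ ⟨hx, hy⟩
        rcases hx with rfl | ⟨c, hc, rfl⟩
        · show maxOp none y ∈ V
          rw [maxOp_none_left]; exact h1
        rcases hy with rfl | ⟨d, hd, rfl⟩
        · show maxOp (some c) none ∈ V
          rw [maxOp_some_none]; exact h1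
        rcases max_choice c d with h | h <;> (show some (max c d) ∈ V) <;> rw [h]
        · exact hc
        · exact hd
    | none, some b =>
      obtain ⟨h1, h2⟩ := nf_mem_nhds_none.mp hV
      refine Filter.mem_prod_iff.mpr
        ⟨insert none (some '' ({k : ℕ | some k ∈ V} ∩ {k | b < k})), ?_, {some b},
          nf_mem_nhds_some rfl, ?_⟩
      · refine nf_mem_nhds_none.mpr ⟨Set.mem_insert _ _, ?_⟩
        have : {n : ℕ | some n ∈ insert none (some '' ({k : ℕ | some k ∈ V} ∩ {k | b < k}))}
            = {k : ℕ | some k ∈ V} ∩ {k | b < k} := by ext k; simp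
        rw [this]
        exact Filter.inter_mem h2 (free_gt_mem hF b)
      · rintro ⟨x, y⟩ ⟨hx, hy⟩
        simp only [Set.mem_singleton_iff] at hy
        subst hy
        rcases hx with rfl | ⟨c, ⟨hc1, hc2⟩, rfl⟩
        · show maxOp none (some b) ∈ V
          rw [maxOp_none_left]; exact h1
        show some (max c b) ∈ V
        rw [max_eq_left (le_of_lt hc2)]
        exact hc1
    | some a, none =>
      obtain ⟨h1, h2⟩ := nf_mem_nhds_none.mp hV
      refine Filter.mem_prod_iff.mpr
        ⟨{some a}, nf_mem_nhds_some rfl,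
         insert none (some '' ({k : ℕ | some k ∈ V} ∩ {k | a < k})), ?_, ?_⟩
      · refine nf_mem_nhds_none.mpr ⟨Set.mem_insert _ _, ?_⟩
        have : {n : ℕ | some n ∈ insert none (some '' ({k : ℕ | some k ∈ V} ∩ {k | a < k}))}
            = {k : ℕ | some k ∈ V} ∩ {k | a < k} := by ext k; simp
        rw [this]
        exact Filter.inter_mem h2 (free_gt_mem hF a)
      · rintro ⟨x, y⟩ ⟨hx, hy⟩
        simp only [Set.mem_singleton_iff] at hx
        subst hx
        rcases hy with rfl | ⟨c, ⟨hc1, hc2⟩, rfl⟩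
        · show maxOp (some a) none ∈ V
          rw [maxOp_some_none]; exact h1
        show some (max a c) ∈ V
        rw [max_eq_right (le_of_lt hc2)]
        exact hc1

lemma nf_tendsto_some (F : Filter ℕ) :
    Filter.Tendsto some F (@nhds _ (nfTop F) none) := by
  intro V hV
  obtain ⟨-, h2⟩ := nf_mem_nhds_none.mp hV
  exact h2

lemma nf_ahcomplete {F : Filter ℕ} (hF : FreeF F) (hne : F.NeBot) :
    @AHComplete (Option ℕ) (nfTop F) maxOp := by
  letI := nfTop F
  intro Y _ opY hY h hcont hhom
  haveI := hY.t2
  apply isClosed_of_closure_subset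
  intro y hy
  obtain ⟨u, hu, huy⟩ := mem_closure_iff_ultrafilter.mp hy
  have hrange : h '' (Set.univ : Set (Option ℕ)) ∈ u := by rwa [Set.image_univ]
  set v' : Ultrafilter (Option ℕ) := Ultrafilter.ofComapInfPrincipal hrange with hv'
  have hmap : v'.map h = u := Ultrafilter.ofComapInfPrincipal_eq_of_map hrange
  have htend : Filter.Tendsto h (v' : Filter (Option ℕ)) (𝓝 y) := by
    rw [Filter.Tendsto, show Filter.map h ↑v' = ↑(v'.map h) from rfl, hmap]
    exact huy
  by_cases hnone : ({none} : Set (Option ℕ)) ∈ v'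
  · have hle : (v' : Filter (Option ℕ)) ≤ pure none := by
      rwa [← Filter.principal_singleton, Filter.le_principal_iff]
    have h2 : Filter.Tendsto h (v' : Filter (Option ℕ)) (𝓝 (h none)) :=
      le_trans (le_trans (Filter.map_mono hle) (by rw [Filter.map_pure])) (pure_le_nhds _)
    exact ⟨none, tendsto_nhds_unique h2 htend⟩
  · have hsome : Set.range (some : ℕ → Option ℕ) ∈ v' := by
      have h1 := (Ultrafilter.compl_mem_iff_notMem (s := ({none} : Set (Option ℕ)))).mpr hnone
      rwa [← Set.compl_range_some, compl_compl] at h1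
    set v : Ultrafilter ℕ := v'.comap (Option.some_injective ℕ) hsome with hv
    have hmapv : Filter.map some (v : Filter ℕ) = (v' : Filter (Option ℕ)) := by
      rw [hv, Ultrafilter.coe_comap, Filter.map_comap, inf_eq_left]
      exact Filter.le_principal_iff.mpr hsome
    set a : ℕ → Y := fun n => h (some n) with ha
    set e : Y := h none with he
    have hta : Filter.Tendsto a (v : Filter ℕ) (𝓝 y) := by
      have : Filter.map a (v : Filter ℕ) = Filter.map h (Filter.map some ↑v) := by
        rw [Filter.map_map]; rfl
      rw [Filter.Tendsto, this, hmapv]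
      exact htend
    by_cases hfin : ∃ n : ℕ, ({n} : Set ℕ) ∈ v
    · obtain ⟨n, hn⟩ := hfin
      have hle : (v : Filter ℕ) ≤ pure n := by
        rwa [← Filter.principal_singleton, Filter.le_principal_iff]
      have h2 : Filter.Tendsto a (v : Filter ℕ) (𝓝 (a n)) :=
        le_trans (le_trans (Filter.map_mono hle) (by rw [Filter.map_pure])) (pure_le_nhds _)
      exact ⟨some n, tendsto_nhds_unique h2 hta⟩
    · push_neg at hfin
      have hcof : ∀ s : Set ℕ, s.Finite → sᶜ ∈ (v : Filter ℕ) := by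
        intro s hs
        refine compl_finite_mem (fun n => ?_) hs
        exact (Ultrafilter.compl_mem_iff_notMem).mpr (hfin n)
      -- step 1 : ∀ m, opY (a m) y = y
      have step1 : ∀ m : ℕ, opY (a m) y = y := by
        intro m
        have t1 : Filter.Tendsto (fun n => opY (a m) (a n)) (v : Filter ℕ) (𝓝 (opY (a m) y)) :=
          (hY.cont.tendsto (a m, y)).comp (tendsto_const_nhds.prodMk_nhds hta)
        have ev : (fun n => opY (a m) (a n)) =ᶠ[(v : Filter ℕ)] a := by
          have hmem : {n : ℕ | m ≤ n} ∈ (v : Filter ℕ) := by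
            have : {n : ℕ | m ≤ n} = (Set.Iio m)ᶜ := by ext k; simp
            rw [this]; exact hcof _ (Set.finite_Iio m)
          filter_upwards [hmem] with n hn
          have : maxOp (some m) (some n) = some n := by
            rw [maxOp_some_some, max_eq_right hn]
          rw [← hhom, this]
        have t2 : Filter.Tendsto (fun n => opY (a m) (a n)) (v : Filter ℕ) (𝓝 y) :=
          Filter.Tendsto.congr' ev.symm hta
        exact tendsto_nhds_unique t1 t2
      -- step 2 : Tendsto a F (𝓝 e)
      have step2 : Filter.Tendsto a F (𝓝 e) := (hcont.tendsto none).comp (nf_tendsto_some F)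
      -- step 3 : opY e y = y
      have step3 : opY e y = y := by
        have t3 : Filter.Tendsto (fun m => opY (a m) y) F (𝓝 (opY e y)) :=
          (hY.cont.tendsto (e, y)).comp (step2.prodMk_nhds tendsto_const_nhds)
        have t3' : Filter.Tendsto (fun m => opY (a m) y) F (𝓝 y) := by
          have : (fun m => opY (a m) y) = fun _ => y := funext step1
          rw [this]; exact tendsto_const_nhds
        exact tendsto_nhds_unique t3 t3'
      -- step 4 : opY e y = e
      have step4 : opY e y = e := by
        have t4 : Filter.Tendsto (fun n => opY e (a n)) (v : Filter ℕ) (𝓝 (opY e y)) :=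
          (hY.cont.tendsto (e, y)).comp (tendsto_const_nhds.prodMk_nhds hta)
        have t4' : Filter.Tendsto (fun n => opY e (a n)) (v : Filter ℕ) (𝓝 e) := by
          have : (fun n => opY e (a n)) = fun _ => e := by
            funext n
            rw [← hhom, maxOp_none_left]
          rw [this]; exact tendsto_const_nhds
        exact tendsto_nhds_unique t4 t4'
      exact ⟨none, by rw [← he, ← step4, step3]⟩

lemma freeF_cofinite : FreeF (Filter.cofinite : Filter ℕ) := by
  rw [FreeF, Set.eq_empty_iff_forall_notMem]
  intro k hk
  have := Set.mem_sInter.mp hk ({k}ᶜ) (by simp [Filter.mem_cofinite])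
  simp at this


/-- the discrete semilattice (ℕ, max) has no universal 𝓐𝓗-completion. -/
theorem no_universal_AH_completion_max :
    ¬ ∃ (S : Type) (_ : TopologicalSpace S) (op : S → S → S),
      IsTopSemilattice S op ∧ AHComplete S op ∧
      ∃ ι : ℕ → S, Topology.IsEmbedding ι ∧
        (∀ m n : ℕ, ι (max m n) = op (ι m) (ι n)) ∧ DenseRange ι ∧
        ∀ (Y : Type) (_ : TopologicalSpace Y) (opY : Y → Y → Y),
          IsTopSemilattice Y opY → AHComplete Y opY →
          ∀ f : ℕ → Y, Continuous f → (∀ m n : ℕ, f (max m n) = opY (f m) (f n)) →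
            ∃ g : S → Y, Continuous g ∧
              (∀ a b : S, g (op a b) = opY (g a) (g b)) ∧ ∀ n : ℕ, g (ι n) = f n := by
  rintro ⟨S, tS, op, hS, hAH, ι, hemb, hhom, hdense, huniv⟩
  haveI := hS.t2
  have hinj := hemb.injective
  -- every point of the image is isolated
  have hisol : ∀ n : ℕ, IsOpen ({ι n} : Set S) := by
    intro n
    obtain ⟨V, hV, hVn⟩ := hemb.toIsInducing.isOpen_iff.mp (isOpen_discrete ({n} : Set ℕ))
    have hsub : V ⊆ {ι n} := by
      refine (hdense.open_subset_closure_inter hV).trans ?_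
      have : V ∩ Set.range ι ⊆ {ι n} := by
        rintro x ⟨hxV, k, rfl⟩
        have : k ∈ ι ⁻¹' V := hxV
        rw [hVn] at this
        simp only [Set.mem_singleton_iff] at this ⊢
        rw [this]
      refine (closure_mono this).trans ?_
      rw [IsClosed.closure_eq isClosed_singleton]
    have hmem : ι n ∈ V := by
      have : n ∈ ι ⁻¹' V := by rw [hVn]; rfl
      exact this
    have : V = {ι n} := Set.Subset.antisymm hsub (by simpa using hmem)
    rwa [← this]
  by_cases hsurj : ∀ s : S, s ∈ Set.range ι
  · -- S = ι(ℕ) is discrete, but discrete (ℕ, max) is not AH-complete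
    haveI : DiscreteTopology S := discreteTopology_iff_isOpen_singleton.mpr
      (fun s => by obtain ⟨n, rfl⟩ := hsurj s; exact hisol n)
    classical
    letI : TopologicalSpace (Option ℕ) := nfTop Filter.cofinite
    have hts := nf_topsemilattice freeF_cofinite
    haveI := hts.t2
    set f : S → ULift (Option ℕ) := fun s => ULift.up (some (Function.invFun ι s)) with hf
    have linv : ∀ k : ℕ, Function.invFun ι (ι k) = k := fun k =>
      Function.leftInverse_invFun hinj k
    set opY : ULift (Option ℕ) → ULift (Option ℕ) → ULift (Option ℕ) :=
      fun a b => ULift.up (maxOp a.down b.down) with hopY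
    have hYts : IsTopSemilattice (ULift (Option ℕ)) opY := by
      refine ⟨inferInstance, ?_, ?_, ?_, ?_⟩
      · intro a b; simp only [hopY, hts.comm]
      · intro a; simp only [hopY, hts.idem]
      · intro a b c; simp only [hopY, ULift.down_up, hts.assoc]
      · exact continuous_uliftUp.comp (hts.cont.comp
          ((continuous_uliftDown.comp continuous_fst).prodMk
            (continuous_uliftDown.comp continuous_snd)))
    have hclosed := hAH (ULift (Option ℕ)) opY hYts f continuous_of_discreteTopology ?_
    · have himg : (Homeomorph.ulift : ULift (Option ℕ) ≃ₜ Option ℕ) '' Set.range f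
          = Set.range (some : ℕ → Option ℕ) := by
        ext x
        constructor
        · rintro ⟨y, ⟨t, rfl⟩, rfl⟩
          exact ⟨Function.invFun ι t, rfl⟩
        · rintro ⟨n, rfl⟩
          exact ⟨ULift.up (some n), ⟨ι n, by rw [hf]; simp [linv]⟩, rfl⟩
      have hclosed2 : IsClosed (Set.range (some : ℕ → Option ℕ)) := by
        rw [← himg]
        exact (Homeomorph.ulift (X := Option ℕ)).isClosedMap _ hclosed
      have hopen : IsOpen[nfTop Filter.cofinite] (Set.range (some : ℕ → Option ℕ))ᶜ :=
        hclosed2.isOpen_compl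
      rw [Set.compl_range_some] at hopen
      have := hopen rfl
      simp only [Set.mem_singleton_iff, reduceCtorEq, Set.setOf_false, Filter.mem_cofinite,
        Set.compl_empty] at this
      exact Set.infinite_univ this
    · intro a b
      obtain ⟨m, rfl⟩ := hsurj a
      obtain ⟨n, rfl⟩ := hsurj b
      rw [← hhom, hf]
      simp only [hopY, ULift.down_up, linv]
      rw [maxOp_some_some]
  · push_neg at hsurj
    obtain ⟨s, hs⟩ := hsurj
    set ℱ : Filter ℕ := Filter.comap ι (𝓝 s) with hℱ
    haveI hℱne : ℱ.NeBot := by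
      rw [hℱ, Filter.comap_neBot_iff]
      intro t ht
      obtain ⟨x, hxt, k, rfl⟩ := mem_closure_iff_nhds.mp (hdense s) t ht
      exact ⟨k, hxt⟩
    have hℱfree : FreeF ℱ := by
      rw [FreeF, Set.eq_empty_iff_forall_notMem]
      intro n hn
      have hmem : ι ⁻¹' ({ι n}ᶜ) ∈ ℱ := by
        rw [hℱ]
        refine Filter.preimage_mem_comap ?_
        refine IsOpen.mem_nhds isClosed_singleton.isOpen_compl ?_
        simp only [Set.mem_compl_iff, Set.mem_singleton_iff]
        intro h; exact hs ⟨n, h.symm⟩ |>.elim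
      have := Set.mem_sInter.mp hn _ hmem
      simp at this
    -- choose an infinite set not in ℱ
    obtain ⟨A, hAinf, hA⟩ : ∃ A : Set ℕ, A.Infinite ∧ A ∉ ℱ := by
      by_cases hEv : {n : ℕ | Even n} ∈ ℱ
      · refine ⟨{n : ℕ | Even n}ᶜ, ?_, ?_⟩
        · exact Set.infinite_of_injective_forall_mem
            (f := fun k : ℕ => 2 * k + 1)
            (fun a b hab => by simp only at hab; omega) (fun a => by simp [Nat.even_add_one, parity_simps])
        · intro hc
          have := Filter.inter_mem hEv hc
          rw [Set.inter_compl_self] at this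
          exact Filter.empty_notMem ℱ this
      · exact ⟨{n : ℕ | Even n}, Set.infinite_of_injective_forall_mem
          (f := fun k : ℕ => 2 * k) (fun a b hab => by simp only at hab; omega) (fun a => ⟨a, (two_mul a)⟩), hEv⟩
    set 𝒢 : Filter ℕ := Filter.cofinite ⊓ Filter.principal A with h𝒢
    haveI h𝒢ne : 𝒢.NeBot := Filter.cofinite_inf_principal_neBot_iff.mpr hAinf
    have h𝒢free : FreeF 𝒢 := by
      rw [FreeF, Set.eq_empty_iff_forall_notMem]
      intro n hn
      have hmem : ({n}ᶜ : Set ℕ) ∈ 𝒢 :=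
        Filter.le_def.mp inf_le_left _ (by simp [Filter.mem_cofinite])
      have := Set.mem_sInter.mp hn _ hmem
      simp at this
    have hA𝒢 : A ∈ 𝒢 := Filter.le_def.mp inf_le_right _ (Filter.mem_principal_self A)
    letI : TopologicalSpace (Option ℕ) := nfTop 𝒢
    -- apply universality
    obtain ⟨g, gcont, ghom, gι⟩ := huniv (Option ℕ) (nfTop 𝒢) maxOp
      (nf_topsemilattice h𝒢free) (nf_ahcomplete h𝒢free h𝒢ne)
      (fun n => some n) continuous_of_discreteTopology
      (fun m n => (maxOp_some_some m n).symm)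
    have htend : Filter.Tendsto ι ℱ (𝓝 s) := by rw [hℱ]; exact Filter.tendsto_comap
    have htend2 : Filter.Tendsto (fun n : ℕ => (some n : Option ℕ)) ℱ
        (@nhds _ (nfTop 𝒢) (g s)) := by
      have h1 := (gcont.tendsto s).comp htend
      exact h1.congr (fun n => gι n)
    cases hgs : g s with
    | some n =>
      have hmem : ({some n} : Set (Option ℕ)) ∈ @nhds _ (nfTop 𝒢) (g s) := by
        rw [hgs]; exact nf_mem_nhds_some rfl
      have hpre : (fun k : ℕ => (some k : Option ℕ)) ⁻¹' {some n} ∈ ℱ := by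
        have := htend2 hmem
        rwa [Filter.mem_map] at this
      have heq : (fun k : ℕ => (some k : Option ℕ)) ⁻¹' {some n} = {n} := by ext k; simp
      rw [heq] at hpre
      have := Filter.inter_mem hpre (free_compl_singleton hℱfree n)
      rw [Set.inter_compl_self] at this
      exact Filter.empty_notMem ℱ this
    | none =>
      have hmem : (insert none (some '' A) : Set (Option ℕ)) ∈ @nhds _ (nfTop 𝒢) (g s) := by
        rw [hgs]
        refine nf_mem_nhds_none.mpr ⟨Set.mem_insert _ _, ?_⟩
        have : {k : ℕ | some k ∈ (insert none (some '' A) : Set (Option ℕ))} = A := by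
          ext k; simp
        rw [this]; exact hA𝒢
      have hpre := htend2 hmem
      rw [Filter.mem_map] at hpre
      have heq : (fun k : ℕ => (some k : Option ℕ)) ⁻¹' insert none (some '' A) = A := by
        ext k; simp
      rw [heq] at hpre
      exact hA hpre
end

section
/- Let ℱ be a free filter on ℕ and F ∈ ℱ with ℕ \ F infinite. Then the Rees quotient of E = (ℕ_{ℱ,min} × {0}) ∪ ((ℕ \ F) × {1}) by the ideal I = ℕ_{ℱ,min} × {0}, endowed with the quotient topology, is a discrete topological semilattice that is not 𝓗-complete; consequently E is not 𝓐𝓗-complete. -/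
open Topology Set

/-- The product topology on ℕ_{ℱ,min} × E₂ (E₂ = {0,1} discrete, modelled as `Bool`). -/
def prodTopB (F : Filter ℕ) : TopologicalSpace (Option ℕ × Bool) :=
  @instTopologicalSpaceProd _ _ (nfTop F) inferInstance

/-- The coordinatewise semilattice operation on ℕ_{ℱ,min} × E₂ (min on both coordinates). -/
def pOpB (p q : Option ℕ × Bool) : Option ℕ × Bool := (minOp p.1 q.1, p.2 && q.2)

/-- The subset E = (ℕ_{ℱ,min} × {0}) ∪ ((ℕ \ F) × {1}). -/
def EsetB (Fs : Set ℕ) : Set (Option ℕ × Bool) :=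
  (Set.univ ×ˢ {false}) ∪ ((some '' Fsᶜ) ×ˢ {true})

/-- The ideal I = ℕ_{ℱ,min} × {0}. -/
def IsetB : Set (Option ℕ × Bool) := Set.univ ×ˢ {false}

/-- The subspace topology on E ⊆ ℕ_{ℱ,min} × E₂. -/
def subTopB (F : Filter ℕ) (Fs : Set ℕ) : TopologicalSpace (EsetB Fs) :=
  @instTopologicalSpaceSubtype _ _ (prodTopB F)

/-- The Rees congruence on E identifying all points of the ideal I = ℕ_{ℱ,min} × {0}. -/
def reesSetoidB (Fs : Set ℕ) : Setoid (EsetB Fs) where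
  r a b := a = b ∨ ((a : Option ℕ × Bool) ∈ IsetB ∧ (b : Option ℕ × Bool) ∈ IsetB)
  iseqv := by
    refine ⟨fun _ => Or.inl rfl, ?_, ?_⟩
    · rintro a b (rfl | h)
      · exact Or.inl rfl
      · exact Or.inr ⟨h.2, h.1⟩
    · rintro a b c (rfl | h1) h2
      · exact h2
      · rcases h2 with rfl | h2
        · exact Or.inr h1
        · exact Or.inr ⟨h1.1, h2.2⟩

/-- The quotient topology on the Rees quotient E/I. -/
def qTopB (F : Filter ℕ) (Fs : Set ℕ) : TopologicalSpace (Quotient (reesSetoidB Fs)) :=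
  (subTopB F Fs).coinduced (Quotient.mk (reesSetoidB Fs))


section AuxForReesB

noncomputable def dE (n : ℕ) : ℝ := 1 / (n + 2)

lemma dE_pos (n : ℕ) : 0 < dE n := by unfold dE; positivity

lemma dE_le_half (n : ℕ) : dE n ≤ 1 / 2 := by
  unfold dE
  rw [div_le_div_iff₀ (by positivity) (by norm_num)]
  have : (0:ℝ) ≤ n := Nat.cast_nonneg n
  linarith

lemma dE_lt_one (n : ℕ) : dE n < 1 := lt_of_le_of_lt (dE_le_half n) (by norm_num)

lemma dE_le_iff {n m : ℕ} : dE n ≤ dE m ↔ m ≤ n := by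
  unfold dE
  rw [div_le_div_iff₀ (by positivity) (by positivity)]
  constructor
  · intro h
    exact_mod_cast (by linarith : (m:ℝ) ≤ n)
  · intro h
    have : (m:ℝ) ≤ n := by exact_mod_cast h
    linarith

lemma dE_max (n m : ℕ) : max (dE n) (dE m) = dE (min n m) := by
  rcases le_total n m with h | h
  · rw [min_eq_left h, max_eq_left (dE_le_iff.2 h)]
  · rw [min_eq_right h, max_eq_right (dE_le_iff.2 h)]

lemma isolate_num {n m : ℕ} (h1 : (1:ℝ)/((n:ℝ)+3) < dE m) (h2 : dE m < 2/(2*(n:ℝ)+3)) :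
    m = n := by
  unfold dE at h1 h2
  rw [div_lt_div_iff₀ (by positivity) (by positivity)] at h1 h2
  have hmn : m < n + 1 := by
    exact_mod_cast (by push_cast at h1 ⊢; linarith : (m:ℝ) < (n:ℝ) + 1)
  have hnm : 2*n + 3 < 2*m + 4 := by
    exact_mod_cast (by push_cast at h2 ⊢; linarith : (2*(n:ℝ)+3) < 2*(m:ℝ)+4)
  omega

lemma dE_mem_Ioo (n : ℕ) : (1:ℝ)/((n:ℝ)+3) < dE n ∧ dE n < 2/(2*(n:ℝ)+3) := by
  unfold dE
  constructor <;> rw [div_lt_div_iff₀ (by positivity) (by positivity)] <;> push_cast <;> linarith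

lemma one_not_lt (n : ℕ) : ¬ (1:ℝ) < 2/(2*(n:ℝ)+3) := by
  rw [not_lt, div_le_one (by positivity)]
  have : (0:ℝ) ≤ n := Nat.cast_nonneg n
  linarith

noncomputable def gvalE : Option ℕ × Bool → ℝ
  | (some n, true) => dE n
  | _ => 1

lemma gvalE_false {p : Option ℕ × Bool} (h : p.2 = false) : gvalE p = 1 := by
  obtain ⟨x, b⟩ := p
  cases b
  · cases x <;> rfl
  · simp at h

lemma gvalE_some (n : ℕ) : gvalE (some n, true) = dE n := rfl

lemma mem_IsetB {p : Option ℕ × Bool} : p ∈ IsetB ↔ p.2 = false := by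
  rw [IsetB, Set.mem_prod]
  simp

lemma EsetB_true' {Fs : Set ℕ} {x : Option ℕ} {b : Bool} (hp : (x, b) ∈ EsetB Fs)
    (h : b = true) : ∃ n ∈ Fsᶜ, x = some n := by
  rcases hp with h1 | h2
  · rw [Set.mem_prod] at h1
    simp only [Set.mem_singleton_iff] at h1
    rw [h] at h1
    exact absurd h1.2 (by simp)
  · rw [Set.mem_prod] at h2
    obtain ⟨n, hn, he⟩ := h2.1
    exact ⟨n, hn, he.symm⟩

lemma minOp_comm (a b : Option ℕ) : minOp a b = minOp b a := by
  cases a <;> cases b <;> simp [minOp, Nat.min_comm]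

lemma minOp_idem (a : Option ℕ) : minOp a a = a := by
  cases a <;> simp [minOp]

lemma minOp_assoc (a b c : Option ℕ) : minOp (minOp a b) c = minOp a (minOp b c) := by
  cases a <;> cases b <;> cases c <;> simp [minOp, Nat.min_assoc]

lemma pOpB_comm (p q : Option ℕ × Bool) : pOpB p q = pOpB q p := by
  simp [pOpB, minOp_comm, Bool.and_comm]

lemma pOpB_idem (p : Option ℕ × Bool) : pOpB p p = p := by
  simp [pOpB, minOp_idem]

lemma pOpB_assoc (p q r : Option ℕ × Bool) : pOpB (pOpB p q) r = pOpB p (pOpB q r) := by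
  simp [pOpB, minOp_assoc, Bool.and_assoc]

lemma pOpB_I_left {p q : Option ℕ × Bool} (h : p ∈ IsetB) : pOpB p q ∈ IsetB := by
  rw [mem_IsetB] at h ⊢
  simp [pOpB, h]

lemma pOpB_I_right {p q : Option ℕ × Bool} (h : q ∈ IsetB) : pOpB p q ∈ IsetB := by
  rw [mem_IsetB] at h ⊢
  simp [pOpB, h]

lemma gvalE_pOp {Fs : Set ℕ} {p q : Option ℕ × Bool} (hp : p ∈ EsetB Fs) (hq : q ∈ EsetB Fs) :
    gvalE (pOpB p q) = max (gvalE p) (gvalE q) := by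
  obtain ⟨x, b⟩ := p; obtain ⟨y, c⟩ := q
  cases b
  · have h2 : gvalE (pOpB (x, false) (y, c)) = 1 := gvalE_false (by simp [pOpB])
    rw [h2, gvalE_false rfl]
    cases c
    · rw [gvalE_false rfl]; simp
    · obtain ⟨m, hm, he⟩ := EsetB_true' hq rfl
      subst he
      rw [gvalE_some, max_eq_left (dE_lt_one m).le]
  · obtain ⟨n, hn, he⟩ := EsetB_true' hp rfl
    subst he
    cases c
    · have h2 : gvalE (pOpB (some n, true) (y, false)) = 1 := gvalE_false (by simp [pOpB])
      rw [h2, gvalE_some, gvalE_false rfl, max_eq_right (dE_lt_one n).le]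
    · obtain ⟨m, hm, he⟩ := EsetB_true' hq rfl
      subst he
      show gvalE (some (min n m), true) = _
      rw [gvalE_some, gvalE_some, gvalE_some, dE_max]

universe uR

noncomputable def upMax : ULift.{uR} ℝ → ULift.{uR} ℝ → ULift.{uR} ℝ :=
  fun a b => ULift.up (max a.down b.down)

lemma upMax_slat : IsTopSemilattice (ULift.{uR} ℝ) upMax := by
  refine ⟨inferInstance, ?_, ?_, ?_, ?_⟩
  · intro a b; exact congrArg ULift.up (max_comm _ _)
  · intro a; exact congrArg ULift.up (max_self _)
  · intro a b c; exact congrArg ULift.up (max_assoc _ _ _)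
  · exact continuous_uliftUp.comp (continuous_max.comp
      ((continuous_uliftDown.comp continuous_fst).prodMk
        (continuous_uliftDown.comp continuous_snd)))

lemma infinite_exists_gt {s : Set ℕ} (h : s.Infinite) (N : ℕ) : ∃ n ∈ s, N < n := by
  by_contra hc
  push_neg at hc
  exact h (Set.Finite.subset (Set.finite_Iic N) hc)

end AuxForReesB

/-- the Rees quotient E/I with the quotient topology is a discrete
topological semilattice which is not 𝓗-complete; consequently E is not 𝓐𝓗-complete. -/
theorem reesQuotientB_discrete_not_hComplete (F : Filter ℕ) (hF : FreeF F)
    (Fs : Set ℕ) (hFs : Fs ∈ F) (hinf : Fsᶜ.Infinite)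
    (hsub : ∀ p ∈ EsetB Fs, ∀ q ∈ EsetB Fs, pOpB p q ∈ EsetB Fs) :
    (∃ opQ : Quotient (reesSetoidB Fs) → Quotient (reesSetoidB Fs) → Quotient (reesSetoidB Fs),
      (∀ a b : EsetB Fs,
        opQ (Quotient.mk (reesSetoidB Fs) a) (Quotient.mk (reesSetoidB Fs) b) =
          Quotient.mk (reesSetoidB Fs) ⟨pOpB a.1 b.1, hsub a.1 a.2 b.1 b.2⟩) ∧
      @DiscreteTopology _ (qTopB F Fs) ∧
      @IsTopSemilattice _ (qTopB F Fs) opQ ∧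
      ¬ @HComplete _ (qTopB F Fs) opQ) ∧
    ¬ @AHComplete (EsetB Fs) (subTopB F Fs)
        (fun a b => ⟨pOpB a.1 b.1, hsub a.1 a.2 b.1 b.2⟩) := by
  classical
  letI tOB : TopologicalSpace (Option ℕ × Bool) := prodTopB F
  letI tE : TopologicalSpace (EsetB Fs) := subTopB F Fs
  letI tQ : TopologicalSpace (Quotient (reesSetoidB Fs)) := qTopB F Fs
  -- the quotient operation
  have hwd : ∀ (a₁ b₁ a₂ b₂ : EsetB Fs), (reesSetoidB Fs).r a₁ a₂ → (reesSetoidB Fs).r b₁ b₂ →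
      (Quotient.mk (reesSetoidB Fs) ⟨pOpB a₁.1 b₁.1, hsub a₁.1 a₁.2 b₁.1 b₁.2⟩ =
       Quotient.mk (reesSetoidB Fs) ⟨pOpB a₂.1 b₂.1, hsub a₂.1 a₂.2 b₂.1 b₂.2⟩) := by
    intro a₁ b₁ a₂ b₂ ha hb
    rcases ha with ha | ha
    · subst ha
      rcases hb with hb | hb
      · subst hb; rfl
      · exact Quotient.sound (Or.inr ⟨pOpB_I_right hb.1, pOpB_I_right hb.2⟩)
    · exact Quotient.sound (Or.inr ⟨pOpB_I_left ha.1, pOpB_I_left ha.2⟩)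
  let opQ : Quotient (reesSetoidB Fs) → Quotient (reesSetoidB Fs) → Quotient (reesSetoidB Fs) :=
    Quotient.lift₂
      (fun a b => Quotient.mk (reesSetoidB Fs) ⟨pOpB a.1 b.1, hsub a.1 a.2 b.1 b.2⟩) hwd
  -- discreteness of the quotient topology
  have hopenI : IsOpen[prodTopB F] ((Set.univ : Set (Option ℕ)) ×ˢ ({false} : Set Bool)) := by
    letI := nfTop F
    exact IsOpen.prod isOpen_univ (isOpen_discrete _)
  have hopenS : ∀ n : ℕ, IsOpen[prodTopB F] ({(some n, true)} : Set (Option ℕ × Bool)) := by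
    intro n
    letI := nfTop F
    have h1 : IsOpen ({some n} : Set (Option ℕ)) := by
      intro h
      exact absurd h (by simp)
    have h2 := h1.prod (isOpen_discrete ({true} : Set Bool))
    rw [Set.singleton_prod_singleton] at h2
    exact h2
  have hdisc : DiscreteTopology (Quotient (reesSetoidB Fs)) := by
    rw [discreteTopology_iff_isOpen_singleton]
    intro q
    induction q using Quotient.ind with | _ a =>
    obtain ⟨⟨x, s⟩, ha⟩ := a
    refine isOpen_coinduced.mpr (isOpen_induced_iff.mpr ?_)
    cases s
    · refine ⟨(Set.univ : Set (Option ℕ)) ×ˢ ({false} : Set Bool), hopenI, ?_⟩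
      ext ⟨⟨y, t⟩, hb⟩
      simp only [Set.mem_preimage, Set.mem_prod, Set.mem_univ, Set.mem_singleton_iff,
        true_and]
      constructor
      · intro ht
        exact Quotient.sound (Or.inr ⟨mem_IsetB.mpr ht, mem_IsetB.mpr rfl⟩)
      · intro hq
        rcases Quotient.exact hq with h | h
        · have := congrArg (fun z : EsetB Fs => z.1.2) h
          simpa using this
        · exact mem_IsetB.mp h.1
    · obtain ⟨n, hn, hx⟩ := EsetB_true' ha rfl
      subst hx
      refine ⟨{(some n, true)}, hopenS n, ?_⟩
      ext ⟨⟨y, t⟩, hb⟩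
      simp only [Set.mem_preimage, Set.mem_singleton_iff]
      constructor
      · intro ht
        exact congrArg (Quotient.mk (reesSetoidB Fs)) (Subtype.ext ht)
      · intro hq
        rcases Quotient.exact hq with h | h
        · exact congrArg Subtype.val h
        · exact absurd (mem_IsetB.mp h.2) (by simp)
  haveI := hdisc
  have ht2 : T2Space (Quotient (reesSetoidB Fs)) := inferInstance
  have hslat : IsTopSemilattice _ opQ := by
    refine ⟨ht2, ?_, ?_, ?_, ?_⟩
    · intro a b
      induction a using Quotient.ind with | _ a =>
      induction b using Quotient.ind with | _ b =>
      exact congrArg (Quotient.mk (reesSetoidB Fs)) (Subtype.ext (pOpB_comm _ _))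
    · intro a
      induction a using Quotient.ind with | _ a =>
      exact congrArg (Quotient.mk (reesSetoidB Fs)) (Subtype.ext (pOpB_idem _))
    · intro a b c
      induction a using Quotient.ind with | _ a =>
      induction b using Quotient.ind with | _ b =>
      induction c using Quotient.ind with | _ c =>
      exact congrArg (Quotient.mk (reesSetoidB Fs)) (Subtype.ext (pOpB_assoc _ _ _))
    · exact continuous_of_discreteTopology
  -- the map into ℝ
  have hwf : ∀ a b : EsetB Fs, (reesSetoidB Fs).r a b → gvalE a.1 = gvalE b.1 := by
    intro a b hab
    rcases hab with hab | ⟨h1, h2⟩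
    · rw [hab]
    · rw [gvalE_false (mem_IsetB.mp h1), gvalE_false (mem_IsetB.mp h2)]
  let f : Quotient (reesSetoidB Fs) → ℝ := Quotient.lift (fun a => gvalE a.1) hwf
  have hfmk : ∀ a : EsetB Fs, f (Quotient.mk (reesSetoidB Fs) a) = gvalE a.1 := fun _ => rfl
  have hRslat : IsTopSemilattice ℝ (fun a b => max a b) :=
    ⟨inferInstance, max_comm, max_self, max_assoc, continuous_max⟩
  -- range of f is not closed
  have hnc : ¬ IsClosed (Set.range f) := by
    intro hcl
    have h0 : (0:ℝ) ∈ Set.range f := by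
      rw [← hcl.closure_eq, Metric.mem_closure_iff]
      intro ε hε
      obtain ⟨N, hN⟩ := exists_nat_gt (1/ε)
      obtain ⟨n, hn, hNn⟩ := infinite_exists_gt hinf N
      refine ⟨dE n, ⟨Quotient.mk (reesSetoidB Fs) ⟨(some n, true), Or.inr ⟨⟨n, hn, rfl⟩, rfl⟩⟩,
        rfl⟩, ?_⟩
      rw [dist_comm, Real.dist_eq, sub_zero, abs_of_nonneg (dE_pos n).le]
      unfold dE
      rw [div_lt_iff₀ (by positivity)]
      have h2 : (1:ℝ)/ε < (n:ℝ) + 2 := by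
        have : (N:ℝ) ≤ n := by exact_mod_cast hNn.le
        linarith
      calc (1:ℝ) = ε * (1/ε) := by field_simp
        _ < ε * ((n:ℝ)+2) := by exact mul_lt_mul_of_pos_left h2 hε
    obtain ⟨q, hq⟩ := h0
    induction q using Quotient.ind with | _ a =>
    obtain ⟨⟨x, s⟩, ha⟩ := a
    cases s
    · rw [hfmk, gvalE_false rfl] at hq
      norm_num at hq
    · obtain ⟨n, hn, hx⟩ := EsetB_true' ha rfl
      subst hx
      rw [hfmk, gvalE_some] at hq
      exact (dE_pos n).ne' hq
  -- f is injective
  have hinj : Function.Injective f := by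
    intro qa qb h
    induction qa using Quotient.ind with | _ a =>
    induction qb using Quotient.ind with | _ b =>
    obtain ⟨⟨x, s⟩, ha⟩ := a
    obtain ⟨⟨y, t⟩, hb⟩ := b
    cases s <;> cases t
    · exact Quotient.sound (Or.inr ⟨mem_IsetB.mpr rfl, mem_IsetB.mpr rfl⟩)
    · obtain ⟨m, hm, hy⟩ := EsetB_true' hb rfl
      subst hy
      rw [hfmk, hfmk, gvalE_false rfl, gvalE_some] at h
      exact absurd h.symm (ne_of_lt (dE_lt_one m))
    · obtain ⟨n, hn, hx⟩ := EsetB_true' ha rfl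
      subst hx
      rw [hfmk, hfmk, gvalE_some, gvalE_false rfl] at h
      exact absurd h (ne_of_lt (dE_lt_one n))
    · obtain ⟨n, hn, hx⟩ := EsetB_true' ha rfl
      subst hx
      obtain ⟨m, hm, hy⟩ := EsetB_true' hb rfl
      subst hy
      rw [hfmk, hfmk, gvalE_some, gvalE_some] at h
      have hnm : n = m := by
        have h1 := dE_le_iff.mp h.le
        have h2 := dE_le_iff.mp h.ge
        omega
      subst hnm
      rfl
  -- each point of the quotient is isolated in the image
  have hiso : ∀ q : Quotient (reesSetoidB Fs), ∃ U : Set ℝ, IsOpen U ∧ f ⁻¹' U = {q} := by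
    intro q
    induction q using Quotient.ind with | _ a =>
    obtain ⟨⟨x, s⟩, ha⟩ := a
    cases s
    · refine ⟨Set.Ioi (1/2), isOpen_Ioi, ?_⟩
      ext qb
      induction qb using Quotient.ind with | _ b =>
      obtain ⟨⟨y, t⟩, hb⟩ := b
      simp only [Set.mem_preimage, Set.mem_Ioi, Set.mem_singleton_iff]
      cases t
      · constructor
        · intro _
          exact Quotient.sound (Or.inr ⟨mem_IsetB.mpr rfl, mem_IsetB.mpr rfl⟩)
        · intro _
          rw [hfmk, gvalE_false rfl]
          norm_num
      · obtain ⟨m, hm, hy⟩ := EsetB_true' hb rfl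
        subst hy
        constructor
        · intro hlt
          rw [hfmk, gvalE_some] at hlt
          linarith [dE_le_half m]
        · intro hq
          rcases Quotient.exact hq with h | h
          · exact absurd (congrArg (fun z : EsetB Fs => z.1.2) h) (by simp)
          · exact absurd (mem_IsetB.mp h.1) (by simp)
    · obtain ⟨n, hn, hx⟩ := EsetB_true' ha rfl
      subst hx
      refine ⟨Set.Ioo ((1:ℝ)/((n:ℝ)+3)) (2/(2*(n:ℝ)+3)), isOpen_Ioo, ?_⟩
      ext qb
      induction qb using Quotient.ind with | _ b =>
      obtain ⟨⟨y, t⟩, hb⟩ := b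
      simp only [Set.mem_preimage, Set.mem_Ioo, Set.mem_singleton_iff]
      cases t
      · constructor
        · intro hlt
          rw [hfmk, gvalE_false rfl] at hlt
          exact absurd hlt.2 (one_not_lt n)
        · intro hq
          rcases Quotient.exact hq with h | h
          · exact absurd (congrArg (fun z : EsetB Fs => z.1.2) h) (by simp)
          · exact absurd (mem_IsetB.mp h.2) (by simp)
      · obtain ⟨m, hm, hy⟩ := EsetB_true' hb rfl
        subst hy
        constructor
        · intro hlt
          rw [hfmk, gvalE_some] at hlt
          have hmn := isolate_num hlt.1 hlt.2
          subst hmn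
          rfl
        · intro hq
          rcases Quotient.exact hq with h | h
          · have hy : (some m, true) = ((some n, true) : Option ℕ × Bool) :=
              congrArg Subtype.val h
            have hmn : m = n := by simpa using hy
            subst hmn
            rw [hfmk, gvalE_some]
            exact dE_mem_Ioo _
          · exact absurd (mem_IsetB.mp h.2) (by simp)
  have hemb : Topology.IsEmbedding f := by
    refine ⟨⟨?_⟩, hinj⟩
    rw [hdisc.eq_bot]
    symm
    apply eq_bot_of_singletons_open
    intro q
    obtain ⟨U, hU, hUeq⟩ := hiso q
    exact isOpen_induced_iff.mpr ⟨U, hU, hUeq⟩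
  have hfhom : ∀ qa qb, f (opQ qa qb) = max (f qa) (f qb) := by
    intro qa qb
    induction qa using Quotient.ind with | _ a =>
    induction qb using Quotient.ind with | _ b =>
    show gvalE (pOpB a.1 b.1) = max (gvalE a.1) (gvalE b.1)
    exact gvalE_pOp a.2 b.2
  have hupemb : ∀ h : Topology.IsEmbedding f,
      Topology.IsEmbedding (fun q => (ULift.up (f q) : ULift ℝ)) := fun h =>
    (Homeomorph.ulift.symm.isEmbedding).comp h
  refine ⟨⟨opQ, fun a b => rfl, hdisc, hslat, ?_⟩, ?_⟩
  · intro hH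
    have hcl := hH (ULift ℝ) upMax upMax_slat (fun q => ULift.up (f q))
      (hupemb hemb) (fun a b => congrArg ULift.up (hfhom a b))
    have h3 : Set.range f = ULift.down '' Set.range (fun q => (ULift.up (f q) : ULift ℝ)) := by
      rw [← Set.range_comp]
      rfl
    exact hnc (h3 ▸ Topology.IsClosedEmbedding.uliftDown.isClosedMap _ hcl)
  · intro hA
    have hcont : Continuous (fun a : EsetB Fs => (ULift.up (gvalE a.1) : ULift ℝ)) := by
      have h1 : Continuous (Quotient.mk (reesSetoidB Fs)) := continuous_coinduced_rng
      have h2 : Continuous f := continuous_of_discreteTopology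
      exact continuous_uliftUp.comp (h2.comp h1)
    have hcl := hA (ULift ℝ) upMax upMax_slat (fun a => ULift.up (gvalE a.1)) hcont
      (fun a b => congrArg ULift.up (gvalE_pOp a.2 b.2))
    have h3 : Set.range f = ULift.down '' Set.range
        (fun a : EsetB Fs => (ULift.up (gvalE a.1) : ULift ℝ)) := by
      rw [← Set.range_comp]
      ext y
      constructor
      · rintro ⟨q, rfl⟩
        induction q using Quotient.ind with | _ a =>
        exact ⟨a, rfl⟩
      · rintro ⟨a, rfl⟩
        exact ⟨Quotient.mk (reesSetoidB Fs) a, rfl⟩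
    exact hnc (h3 ▸ Topology.IsClosedEmbedding.uliftDown.isClosedMap _ hcl)
end
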